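/- arXiv:1907.10868 — 6 statements merged into one kernel-verified Lean document; each statement's English description precedes it below -/
import Mathlib

section
/- Define a sequence of positive integers by m₁ := 1 and m_{j+1} := ∏_{l=1}^{j} (2 m_l⁴ + 1). Then for every j ≥ 1, the integer 2 m_j⁴ + 1 cannot be written as x² + y² with x, y rational numbers. -/
private lemma zmod4_claim : ∀ A B C : ZMod 4, A^2 + B^2 = 3 * C^2 →
    A^2 = 0 ∧ B^2 = 0 ∧ C^2 = 0 := by decide

private lemma descent (n : ℕ) (hn : n % 4 = 3) :
    ∀ c : ℕ, 0 < c → ∀ a b : ℤ, a^2 + b^2 ≠ (n:ℤ) * (c:ℤ)^2 := by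
  intro c
  induction c using Nat.strong_induction_on with
  | _ c ih =>
    intro hc a b h
    have h4 : ((a : ZMod 4))^2 + ((b : ZMod 4))^2 = 3 * ((c : ZMod 4))^2 := by
      have hcast : ((a^2 + b^2 : ℤ) : ZMod 4) = (((n:ℤ) * (c:ℤ)^2 : ℤ) : ZMod 4) := by
        rw [h]
      push_cast at hcast
      have hn4 : ((n : ℕ) : ZMod 4) = 3 := by
        rw [show n = 4 * (n / 4) + 3 by omega]
        push_cast
        simp [show (4 : ZMod 4) = 0 from by decide]
      rw [hn4] at hcast
      linear_combination hcast
    obtain ⟨hA, hB, hC⟩ := zmod4_claim _ _ _ h4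
    -- 4 ∣ a², hence 2 ∣ a
    have ha2 : (2:ℤ) ∣ a := by
      have : ((a^2 : ℤ) : ZMod 4) = 0 := by push_cast; exact hA
      have h4a : (4:ℤ) ∣ a^2 := by
        have := (ZMod.intCast_zmod_eq_zero_iff_dvd (a^2) 4).mp this
        exact_mod_cast this
      have : (2:ℤ) ∣ a^2 := dvd_trans (by norm_num) h4a
      exact Int.Prime.dvd_pow' Nat.prime_two this
    have hb2 : (2:ℤ) ∣ b := by
      have : ((b^2 : ℤ) : ZMod 4) = 0 := by push_cast; exact hB
      have h4b : (4:ℤ) ∣ b^2 := by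
        have := (ZMod.intCast_zmod_eq_zero_iff_dvd (b^2) 4).mp this
        exact_mod_cast this
      have : (2:ℤ) ∣ b^2 := dvd_trans (by norm_num) h4b
      exact Int.Prime.dvd_pow' Nat.prime_two this
    have hc2 : 2 ∣ c := by
      have : ((c^2 : ℕ) : ZMod 4) = 0 := by push_cast; exact hC
      have h4c : 4 ∣ c^2 := (ZMod.natCast_eq_zero_iff (c^2) 4).mp this
      have : 2 ∣ c^2 := dvd_trans (by norm_num) h4c
      exact Nat.Prime.dvd_of_dvd_pow Nat.prime_two this
    obtain ⟨a1, rfl⟩ := ha2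
    obtain ⟨b1, rfl⟩ := hb2
    obtain ⟨c1, rfl⟩ := hc2
    have hc1 : 0 < c1 := by omega
    refine ih c1 (by omega) hc1 a1 b1 ?_
    have : (4:ℤ) * (a1^2 + b1^2) = 4 * ((n:ℤ) * (c1:ℤ)^2) := by push_cast at h ⊢; ring_nf; ring_nf at h; linarith
    linarith

private lemma not_sum_rat_sq (n : ℕ) (hn : n % 4 = 3) :
    ¬ ∃ x y : ℚ, (n : ℚ) = x ^ 2 + y ^ 2 := by
  rintro ⟨x, y, hxy⟩
  set a : ℤ := x.num * (y.den : ℤ) with ha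
  set b : ℤ := y.num * (x.den : ℤ) with hb
  set c : ℕ := x.den * y.den with hc
  have hcpos : 0 < c := Nat.mul_pos x.pos y.pos
  refine descent n hn c hcpos a b ?_
  have hx := Rat.num_div_den x
  have hy := Rat.num_div_den y
  have hxd : (x.den : ℚ) ≠ 0 := by exact_mod_cast x.den_nz
  have hyd : (y.den : ℚ) ≠ 0 := by exact_mod_cast y.den_nz
  have key : ((a:ℚ))^2 + ((b:ℚ))^2 = (n:ℚ) * ((c:ℚ))^2 := by
    rw [ha, hb, hc]
    push_cast
    rw [← hx, ← hy] at hxy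
    field_simp at hxy
    linear_combination -hxy
  exact_mod_cast key

/-- Let `(m_j)_{j ≥ 1}` be the sequence of positive integers defined by
`m₁ = 1` and `m_{j+1} = ∏_{l=1}^{j} (2 m_l⁴ + 1)`. Then for every `j ≥ 1`, the integer
`2 m_j⁴ + 1` is not a sum of two squares of rational numbers. -/
theorem not_sum_two_rat_squares_of_seq (m : ℕ → ℕ)
    (h1 : m 1 = 1)
    (hrec : ∀ j : ℕ, 1 ≤ j → m (j + 1) = ∏ l ∈ Finset.Icc 1 j, (2 * m l ^ 4 + 1)) :
    ∀ j : ℕ, 1 ≤ j → ¬ ∃ x y : ℚ, ((2 * m j ^ 4 + 1 : ℕ) : ℚ) = x ^ 2 + y ^ 2 := by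
  have hodd : ∀ j : ℕ, 1 ≤ j → Odd (m j) := by
    intro j hj
    rcases Nat.exists_eq_add_of_le hj with ⟨k, rfl⟩
    cases k with
    | zero => rw [h1]; exact odd_one
    | succ k =>
      rw [show 1 + (k + 1) = (1 + k) + 1 by ring, hrec (1 + k) (by omega)]
      exact Finset.prod_induction _ Odd (fun _ _ ha hb => ha.mul hb) odd_one
        (fun l _ => ⟨m l ^ 4, by ring⟩)
  intro j hj
  have hmod : (2 * m j ^ 4 + 1) % 4 = 3 := by
    obtain ⟨k, hk⟩ := (hodd j hj).pow (n := 4)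
    omega
  exact not_sum_rat_sq _ hmod
end

section
/- Define a sequence of positive integers by m₁ := 1 and m_{j+1} := ∏_{l=1}^{j} (2 m_l⁴ + 1). Then for all j ≠ k, there exist no rational numbers x, y with 2 m_j⁴ + 1 = (x² + y²) · (2 m_k⁴ + 1); that is, the ratio (2 m_j⁴ + 1)/(2 m_k⁴ + 1) is not a sum of two squares of rational numbers. -/
/-- A natural number ≡ 3 mod 4 has a prime factor ≡ 3 mod 4 with odd multiplicity. -/
lemma exists_odd_val_of_mod_four {n : ℕ} (hn : n % 4 = 3) :
    ∃ p : ℕ, p.Prime ∧ p % 4 = 3 ∧ Odd (padicValNat p n) := by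
  by_contra h
  push_neg at h
  have : ∃ x y : ℕ, n = x ^ 2 + y ^ 2 := by
    rw [Nat.eq_sq_add_sq_iff]
    intro q hq hq3
    exact Nat.not_odd_iff_even.mp (h q (Nat.prime_of_mem_primeFactors hq) hq3)
  obtain ⟨x, y, rfl⟩ := this
  have hx : x ^ 2 % 4 = 0 ∨ x ^ 2 % 4 = 1 := by
    rcases Nat.even_or_odd x with ⟨c, rfl⟩ | ⟨c, rfl⟩
    · left; ring_nf; omega
    · right; ring_nf; omega
  have hy : y ^ 2 % 4 = 0 ∨ y ^ 2 % 4 = 1 := by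
    rcases Nat.even_or_odd y with ⟨c, rfl⟩ | ⟨c, rfl⟩
    · left; ring_nf; omega
    · right; ring_nf; omega
  omega

/-- Let `(m_j)_{j ≥ 1}` be the sequence of positive integers defined by
`m₁ = 1` and `m_{j+1} = ∏_{l=1}^{j} (2 m_l⁴ + 1)`. Then for all `j ≠ k` (both ≥ 1), there
are no rationals `x, y` with `2 m_j⁴ + 1 = (x² + y²) · (2 m_k⁴ + 1)`, i.e. the ratio
`(2 m_j⁴ + 1)/(2 m_k⁴ + 1)` is not a sum of two squares of rationals. -/
theorem ratio_not_sum_two_rat_squares_of_seq (m : ℕ → ℕ)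
    (h1 : m 1 = 1)
    (hrec : ∀ j : ℕ, 1 ≤ j → m (j + 1) = ∏ l ∈ Finset.Icc 1 j, (2 * m l ^ 4 + 1)) :
    ∀ j k : ℕ, 1 ≤ j → 1 ≤ k → j ≠ k →
      ¬ ∃ x y : ℚ,
        ((2 * m j ^ 4 + 1 : ℕ) : ℚ) = (x ^ 2 + y ^ 2) * ((2 * m k ^ 4 + 1 : ℕ) : ℚ) := by
  -- all m l are odd for l ≥ 1
  have hodd : ∀ l : ℕ, 1 ≤ l → m l % 2 = 1 := by
    intro l hl
    rcases Nat.exists_eq_add_of_le hl with ⟨l', rfl⟩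
    cases l' with
    | zero => simp [h1]
    | succ n =>
      have he : (1 : ℕ) + (n + 1) = (n + 1) + 1 := by ring
      rw [he, hrec (n + 1) (by omega)]
      have : ∀ s : Finset ℕ, (∏ l ∈ s, (2 * m l ^ 4 + 1)) % 2 = 1 := by
        intro s
        induction s using Finset.induction with
        | empty => simp
        | insert _ _ hns ih =>
          rw [Finset.prod_insert hns, Nat.mul_mod, ih]
          omega
      exact this _
  -- each a_l ≡ 3 mod 4
  have hmod4 : ∀ l : ℕ, 1 ≤ l → (2 * m l ^ 4 + 1) % 4 = 3 := by
    intro l hl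
    have := hodd l hl
    obtain ⟨c, hc⟩ : ∃ c, m l = 2 * c + 1 := ⟨m l / 2, by omega⟩
    rw [hc]; ring_nf; omega
  -- divisibility: a_j ∣ m k when 1 ≤ j < k
  have hdvd : ∀ j k : ℕ, 1 ≤ j → j < k → (2 * m j ^ 4 + 1) ∣ m k := by
    intro j k hj hjk
    obtain ⟨k', rfl⟩ : ∃ k', k = k' + 1 := ⟨k - 1, by omega⟩
    rw [hrec k' (by omega)]
    exact Finset.dvd_prod_of_mem _ (Finset.mem_Icc.mpr ⟨hj, by omega⟩)
  -- a prime dividing a_j cannot divide a_k for j ≠ k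
  have hcop : ∀ j k : ℕ, 1 ≤ j → 1 ≤ k → j ≠ k → ∀ p : ℕ, p.Prime →
      p ∣ (2 * m j ^ 4 + 1) → ¬ p ∣ (2 * m k ^ 4 + 1) := by
    intro j k hj hk hjk p hp hpj hpk
    have key : ∀ a b : ℕ, (2 * m a ^ 4 + 1) ∣ m b → p ∣ (2 * m a ^ 4 + 1) →
        p ∣ (2 * m b ^ 4 + 1) → False := by
      intro a b hab hpa hpb
      have hpm : p ∣ m b := hpa.trans hab
      have h2 : p ∣ 2 * m b ^ 4 := Dvd.dvd.mul_left (hpm.trans ⟨m b ^ 3, by ring⟩) 2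
      have h1' : p ∣ 1 := by
        have := Nat.dvd_sub hpb h2
        simpa using this
      have := Nat.le_of_dvd one_pos h1'
      have := hp.two_le
      omega
    rcases Nat.lt_or_ge j k with h | h
    · exact key j k (hdvd j k hj h) hpj hpk
    · exact key k j (hdvd k j hk (by omega)) hpk hpj
  -- main argument
  intro j k hj hk hjk ⟨x, y, hxy⟩
  set A : ℕ := 2 * m j ^ 4 + 1 with hA
  set B : ℕ := 2 * m k ^ 4 + 1 with hB
  obtain ⟨p, hp, hp3, hpodd⟩ := exists_odd_val_of_mod_four (hmod4 j hj)
  haveI : Fact p.Prime := ⟨hp⟩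
  have hpA : p ∣ A := by
    by_contra hnd
    rw [padicValNat.eq_zero_of_not_dvd hnd] at hpodd
    simp at hpodd
  have hpB : ¬ p ∣ B := hcop j k hj hk hjk p hp hpA
  -- clear denominators
  set c : ℕ := x.den * y.den with hc
  have hcne : c ≠ 0 := Nat.mul_ne_zero x.den_nz y.den_nz
  set a : ℤ := x.num * (y.den : ℤ) with ha
  set b : ℤ := y.num * (x.den : ℤ) with hb
  have hxdne : ((x.den : ℚ)) ≠ 0 := by exact_mod_cast x.den_nz
  have hydne : ((y.den : ℚ)) ≠ 0 := by exact_mod_cast y.den_nz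
  have hxd : (x.num : ℚ) = x * (x.den : ℚ) := (div_eq_iff hxdne).mp (Rat.num_div_den x)
  have hyd : (y.num : ℚ) = y * (y.den : ℚ) := (div_eq_iff hydne).mp (Rat.num_div_den y)
  have hax : (a : ℚ) = x * c := by
    push_cast [ha, hc]
    rw [hxd]; ring
  have hby : (b : ℚ) = y * c := by
    push_cast [hb, hc]
    rw [hyd]; ring
  -- integer equation: B * (a² + b²) = A * c²
  have hintQ : ((B : ℤ) * (a ^ 2 + b ^ 2) : ℤ) = ((A : ℤ) * (c : ℤ) ^ 2 : ℤ) := by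
    have key : ((B : ℚ)) * ((a : ℚ) ^ 2 + (b : ℚ) ^ 2) = (A : ℚ) * (c : ℚ) ^ 2 := by
      rw [hax, hby, hxy]; ring
    exact_mod_cast key
  -- M := A * B * c² is a sum of two integer squares
  set M : ℕ := A * B * c ^ 2 with hM
  have hMsq : ((M : ℤ)) = (a * B) ^ 2 + (b * B) ^ 2 := by
    have : ((M : ℤ)) = (A : ℤ) * (B : ℤ) * (c : ℤ) ^ 2 := by push_cast [hM]; ring
    rw [this]
    linear_combination (B : ℤ) * hintQ.symm
  have hMnat : ∃ u v : ℕ, M = u ^ 2 + v ^ 2 := by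
    refine ⟨(a * B).natAbs, (b * B).natAbs, ?_⟩
    have : ((M : ℤ)) = ((a * B).natAbs : ℤ) ^ 2 + ((b * B).natAbs : ℤ) ^ 2 := by
      rw [hMsq, Int.natAbs_sq, Int.natAbs_sq]
    exact_mod_cast this
  have hMeven : Even (padicValNat p M) := Nat.eq_sq_add_sq_iff.mp hMnat p
    (Nat.mem_primeFactors.mpr ⟨hp, dvd_mul_of_dvd_left (dvd_mul_of_dvd_left hpA B) (c ^ 2),
      Nat.mul_ne_zero (Nat.mul_ne_zero (by omega) (by omega)) (pow_ne_zero _ hcne)⟩) hp3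
  -- compute the valuation of M
  have hAne : A ≠ 0 := by omega
  have hBne : B ≠ 0 := by omega
  have hABne : A * B ≠ 0 := Nat.mul_ne_zero hAne hBne
  have hc2ne : c ^ 2 ≠ 0 := pow_ne_zero _ hcne
  have hval : padicValNat p M =
      padicValNat p A + padicValNat p B + 2 * padicValNat p c := by
    rw [hM, padicValNat.mul hABne hc2ne, padicValNat.mul hAne hBne,
      padicValNat.pow c 2]
  have hpodd' : Odd (padicValNat p A) := by rw [hA]; exact hpodd
  rw [hval, padicValNat.eq_zero_of_not_dvd hpB] at hMeven
  rcases hMeven with ⟨t, ht⟩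
  rcases hpodd' with ⟨s, hs⟩
  omega
end

section
/- A positive integer n can be written as a sum of two squares of rational numbers if and only if n can be written as a sum of two squares of integers. -/
/-- A positive integer `n` is a sum of two squares of rational numbers
if and only if it is a sum of two squares of integers. -/
theorem sum_two_rat_squares_iff_sum_two_int_squares (n : ℕ) (hn : 0 < n) :
    (∃ x y : ℚ, (n : ℚ) = x ^ 2 + y ^ 2) ↔ (∃ a b : ℤ, (n : ℤ) = a ^ 2 + b ^ 2) := by
  constructor
  · rintro ⟨x, y, hxy⟩
    set d : ℕ := x.den * y.den with hd
    have hd0 : d ≠ 0 := Nat.mul_ne_zero x.den_nz y.den_nz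
    set a : ℤ := x.num * y.den with ha
    set b : ℤ := y.num * x.den with hb
    have key : ((n * d ^ 2 : ℕ) : ℚ) = ((a : ℚ)) ^ 2 + ((b : ℚ)) ^ 2 := by
      push_cast [ha, hb, hd]
      have hx : (x.num : ℚ) = x * x.den := by
        exact (Rat.mul_den_eq_num x).symm
      have hy : (y.num : ℚ) = y * y.den := by
        exact (Rat.mul_den_eq_num y).symm
      rw [hx, hy, hxy]; ring
    have keyZ : (n * d ^ 2 : ℕ) = a.natAbs ^ 2 + b.natAbs ^ 2 := by
      have : ((n * d ^ 2 : ℕ) : ℤ) = a ^ 2 + b ^ 2 := by exact_mod_cast key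
      have h2 : ((n * d ^ 2 : ℕ) : ℤ) = (a.natAbs : ℤ) ^ 2 + (b.natAbs : ℤ) ^ 2 := by
        rw [this]; simp [sq_abs, Int.natAbs_sq]
      exact_mod_cast h2
    have hpar : ∀ {q : ℕ}, q.Prime → q % 4 = 3 → Even (padicValNat q n) := by
      intro q hq hq3
      haveI : Fact q.Prime := ⟨hq⟩
      by_cases hqn : q ∣ n
      · have := Nat.eq_sq_add_sq_iff.mp ⟨a.natAbs, b.natAbs, keyZ⟩ q (Nat.mem_primeFactors.mpr ⟨hq, dvd_mul_of_dvd_left hqn _, Nat.mul_ne_zero hn.ne' (pow_ne_zero 2 hd0)⟩) hq3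
        rw [padicValNat.mul hn.ne' (pow_ne_zero 2 hd0), padicValNat.pow d 2] at this
        simpa [parity_simps] using this
      · simp [padicValNat.eq_zero_of_not_dvd hqn]
    obtain ⟨u, v, huv⟩ := Nat.eq_sq_add_sq_iff.mpr (fun q hqm hq3 => hpar (Nat.prime_of_mem_primeFactors hqm) hq3)
    exact ⟨u, v, by exact_mod_cast huv⟩
  · rintro ⟨a, b, hab⟩
    exact ⟨a, b, by exact_mod_cast hab⟩
end

section
/- Define a sequence of positive integers by m₁ := 1 and m_{j+1} := ∏_{l=1}^{j} (2 m_l⁴ + 1). Then every m_j is odd, 2 m_j⁴ + 1 ≡ 3 (mod 4) for every j, and for all j ≠ k the integers 2 m_j⁴ + 1 and 2 m_k⁴ + 1 are coprime. -/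
lemma coprime_aux (M : ℕ) : Nat.Coprime M (2 * M ^ 4 + 1) := by
  have h : 2 * M ^ 4 + 1 = 2 * M ^ 3 * M + 1 := by ring
  rw [h]
  simp [Nat.coprime_mul_left_add_right]

/-- Let `(m_j)_{j ≥ 1}` be the sequence of positive integers defined by
`m₁ = 1` and `m_{j+1} = ∏_{l=1}^{j} (2 m_l⁴ + 1)`. Then every `m_j` is odd,
`2 m_j⁴ + 1 ≡ 3 (mod 4)` for every `j ≥ 1`, and for `j ≠ k` the integers `2 m_j⁴ + 1` and
`2 m_k⁴ + 1` are coprime. -/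
theorem seq_odd_mod_four_coprime (m : ℕ → ℕ)
    (h1 : m 1 = 1)
    (hrec : ∀ j : ℕ, 1 ≤ j → m (j + 1) = ∏ l ∈ Finset.Icc 1 j, (2 * m l ^ 4 + 1)) :
    (∀ j : ℕ, 1 ≤ j → Odd (m j)) ∧
    (∀ j : ℕ, 1 ≤ j → (2 * m j ^ 4 + 1) % 4 = 3) ∧
    (∀ j k : ℕ, 1 ≤ j → 1 ≤ k → j ≠ k →
      Nat.Coprime (2 * m j ^ 4 + 1) (2 * m k ^ 4 + 1)) := by
  have hodd : ∀ j : ℕ, 1 ≤ j → Odd (m j) := by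
    intro j hj
    rcases Nat.exists_eq_add_of_le hj with ⟨i, rfl⟩
    cases i with
    | zero => simp [h1]
    | succ i =>
      rw [show 1 + (i + 1) = (1 + i) + 1 by ring, hrec (1 + i) (by omega)]
      exact Finset.prod_induction _ Odd (fun a b ha hb => ha.mul hb) odd_one
        (fun l _ => ⟨m l ^ 4, by ring⟩)
  have hmod : ∀ j : ℕ, 1 ≤ j → (2 * m j ^ 4 + 1) % 4 = 3 := by
    intro j hj
    obtain ⟨s, hs⟩ := (hodd j hj).pow (n := 4)
    rw [hs]; omega
  have hdvd : ∀ j k : ℕ, 1 ≤ j → j < k → (2 * m j ^ 4 + 1) ∣ m k := by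
    intro j k hj hjk
    rcases Nat.exists_eq_add_of_lt hjk with ⟨i, rfl⟩
    rw [show j + i + 1 = (j + i) + 1 from rfl, hrec (j + i) (by omega)]
    exact Finset.dvd_prod_of_mem _ (Finset.mem_Icc.mpr ⟨hj, by omega⟩)
  have hcop : ∀ j k : ℕ, 1 ≤ j → j < k →
      Nat.Coprime (2 * m j ^ 4 + 1) (2 * m k ^ 4 + 1) :=
    fun j k hj hjk => Nat.Coprime.coprime_dvd_left (hdvd j k hj hjk) (coprime_aux (m k))
  refine ⟨hodd, hmod, fun j k hj hk hne => ?_⟩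
  rcases lt_or_gt_of_ne hne with h | h
  · exact hcop j k hj h
  · exact (hcop k j hk h).symm
end

section
/- Let m and m' be positive integers. The binary quadratic forms over ℚ given by q(x, y) = 8m·x² + 8m·y² and q'(x, y) = 8m'·x² + 8m'·y² are equivalent over ℚ if and only if the product m·m' is a sum of two squares of integers. -/
/-- A natural number that is a sum of two rational squares is a sum of two integer squares. -/
lemma nat_sum_two_rat_squares {n : ℕ} {x y : ℚ} (h : (n : ℚ) = x ^ 2 + y ^ 2) :
    ∃ a b : ℤ, (n : ℤ) = a ^ 2 + b ^ 2 := by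
  rcases Nat.eq_zero_or_pos n with rfl | hn
  · exact ⟨0, 0, by norm_num⟩
  -- clear denominators
  have hxden : (x.den : ℚ) ≠ 0 := by exact_mod_cast x.den_nz
  have hyden : (y.den : ℚ) ≠ 0 := by exact_mod_cast y.den_nz
  have hx : (x.num : ℚ) = x * x.den := by
    exact (Rat.mul_den_eq_num x).symm
  have hy : (y.num : ℚ) = y * y.den := by
    exact (Rat.mul_den_eq_num y).symm
  obtain ⟨A, B, D, hA, hB, hD⟩ :
      ∃ A B D : ℤ, A = x.num * y.den ∧ B = y.num * x.den ∧ D = (x.den : ℤ) * y.den :=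
    ⟨_, _, _, rfl, rfl, rfl⟩
  have key : (n : ℤ) * D ^ 2 = A ^ 2 + B ^ 2 := by
    have : ((n : ℤ) * D ^ 2 : ℚ) = ((A ^ 2 + B ^ 2 : ℤ) : ℚ) := by
      push_cast [hA, hB, hD, hx, hy]
      linear_combination ((x.den : ℚ) * y.den) ^ 2 * h
    exact_mod_cast this
  -- pass to natural numbers
  have hDnz : D ≠ 0 := by
    rw [hD]
    positivity
  have keyN : n * D.natAbs ^ 2 = A.natAbs ^ 2 + B.natAbs ^ 2 := by
    have h2 : ((n * D.natAbs ^ 2 : ℕ) : ℤ) = ((A.natAbs ^ 2 + B.natAbs ^ 2 : ℕ) : ℤ) := by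
      push_cast
      simp only [sq_abs]
      linear_combination key
    exact_mod_cast h2
  have hDN : D.natAbs ≠ 0 := Int.natAbs_ne_zero.mpr hDnz
  have hval : ∀ {q : ℕ}, q.Prime → q % 4 = 3 → Even (padicValNat q n) := by
    intro q hq hq3
    have hall : Even (padicValNat q (n * D.natAbs ^ 2)) := by
      by_cases hqd : q ∣ n * D.natAbs ^ 2
      · exact Nat.eq_sq_add_sq_iff.mp ⟨A.natAbs, B.natAbs, keyN⟩ q
          (Nat.mem_primeFactors.mpr ⟨hq, hqd, Nat.mul_ne_zero hn.ne' (pow_ne_zero 2 hDN)⟩) hq3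
      · rw [padicValNat.eq_zero_of_not_dvd hqd]; exact Even.zero
    haveI : Fact q.Prime := ⟨hq⟩
    rw [padicValNat.mul hn.ne' (pow_ne_zero 2 hDN), padicValNat.pow _ 2] at hall
    rcases hall with ⟨r, hr⟩
    exact ⟨r - padicValNat q D.natAbs, by omega⟩
  obtain ⟨a, b, hab⟩ := Nat.eq_sq_add_sq_iff.mpr (fun q hq' hq3 => hval (Nat.prime_of_mem_primeFactors hq') hq3)
  exact ⟨a, b, by exact_mod_cast hab⟩

/-- For positive integers `m, m'`, the binary quadratic forms
`8m·x² + 8m·y²` and `8m'·x² + 8m'·y²` on `ℚ²` are equivalent over `ℚ` if and only if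
`m · m'` is a sum of two squares of integers. -/
theorem diag_forms_equivalent_iff_sum_two_squares (m m' : ℕ) (hm : 0 < m) (hm' : 0 < m') :
    QuadraticMap.Equivalent
      (QuadraticMap.weightedSumSquares ℚ (![(8 * m : ℚ), (8 * m : ℚ)]))
      (QuadraticMap.weightedSumSquares ℚ (![(8 * m' : ℚ), (8 * m' : ℚ)])) ↔
    ∃ a b : ℤ, ((m : ℤ) * (m' : ℤ)) = a ^ 2 + b ^ 2 := by
  have hm0 : (m : ℚ) ≠ 0 := Nat.cast_ne_zero.mpr hm.ne'
  have hm'0 : (m' : ℚ) ≠ 0 := Nat.cast_ne_zero.mpr hm'.ne'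
  constructor
  · rintro ⟨f⟩
    set v : Fin 2 → ℚ := f ![1, 0] with hv
    have h1 : QuadraticMap.weightedSumSquares ℚ (![(8 * m' : ℚ), (8 * m' : ℚ)]) v
        = QuadraticMap.weightedSumSquares ℚ (![(8 * m : ℚ), (8 * m : ℚ)]) ![1, 0] :=
      f.map_app ![1, 0]
    rw [QuadraticMap.weightedSumSquares_apply, QuadraticMap.weightedSumSquares_apply,
      Fin.sum_univ_two, Fin.sum_univ_two] at h1
    simp only [Matrix.cons_val_zero, Matrix.cons_val_one, Matrix.head_cons, smul_eq_mul] at h1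
    -- h1 : 8m'(v0² + v1²) = 8m
    have h2 : ((m * m' : ℕ) : ℚ) = ((m' : ℚ) * v 0) ^ 2 + ((m' : ℚ) * v 1) ^ 2 := by
      push_cast
      nlinarith [h1]
    obtain ⟨a, b, hab⟩ := nat_sum_two_rat_squares h2
    exact ⟨a, b, by exact_mod_cast hab⟩
  · rintro ⟨a, b, hab⟩
    have habQ : (a : ℚ) ^ 2 + (b : ℚ) ^ 2 = (m : ℚ) * (m' : ℚ) := by exact_mod_cast hab.symm
    set α : ℚ := (a : ℚ) / m' with hα
    set β : ℚ := (b : ℚ) / m' with hβ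
    have hkey : (m' : ℚ) * (α ^ 2 + β ^ 2) = m := by
      have hs : α ^ 2 + β ^ 2 = ((a : ℚ) ^ 2 + (b : ℚ) ^ 2) / (m' : ℚ) ^ 2 := by
        rw [hα, hβ]; ring
      rw [hs, habQ]
      field_simp
    have hαβ : α ^ 2 + β ^ 2 = (m : ℚ) / m' := by
      rw [eq_div_iff hm'0]; linear_combination hkey
    have hone : (α ^ 2 + β ^ 2) * ((m' : ℚ) / m) = 1 := by
      rw [hαβ]
      field_simp
    let F : (Fin 2 → ℚ) →ₗ[ℚ] (Fin 2 → ℚ) :=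
      { toFun := fun w => ![α * w 0 - β * w 1, β * w 0 + α * w 1]
        map_add' := by
          intro u w; funext i; fin_cases i <;> simp <;> ring
        map_smul' := by
          intro c w; funext i; fin_cases i <;> simp <;> ring }
    let G : (Fin 2 → ℚ) →ₗ[ℚ] (Fin 2 → ℚ) :=
      { toFun := fun w => ![(α * w 0 + β * w 1) * (m' / m), (-β * w 0 + α * w 1) * (m' / m)]
        map_add' := by
          intro u w; funext i; fin_cases i <;> simp <;> ring
        map_smul' := by
          intro c w; funext i; fin_cases i <;> simp <;> ring }
    have hFG : F.comp G = LinearMap.id := by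
      apply LinearMap.ext; intro w; funext i
      fin_cases i
      · simp [F, G]
        linear_combination w 0 * hone
      · simp [F, G]
        linear_combination w 1 * hone
    have hGF : G.comp F = LinearMap.id := by
      apply LinearMap.ext; intro w; funext i
      fin_cases i
      · simp [F, G]
        linear_combination w 0 * hone
      · simp [F, G]
        linear_combination w 1 * hone
    refine ⟨⟨LinearEquiv.ofLinear F G hFG hGF, ?_⟩⟩
    intro w
    rw [QuadraticMap.weightedSumSquares_apply, QuadraticMap.weightedSumSquares_apply,
      Fin.sum_univ_two, Fin.sum_univ_two]
    simp only [LinearEquiv.ofLinear_apply, Matrix.cons_val_zero, Matrix.cons_val_one,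
      Matrix.head_cons, smul_eq_mul]
    show (8 * m' : ℚ) * ((α * w 0 - β * w 1) * (α * w 0 - β * w 1))
        + (8 * m' : ℚ) * ((β * w 0 + α * w 1) * (β * w 0 + α * w 1))
        = (8 * m : ℚ) * (w 0 * w 0) + (8 * m : ℚ) * (w 1 * w 1)
    linear_combination (8 * w 0 ^ 2 + 8 * w 1 ^ 2) * hkey
end

section
/- Let C be a monoidal category and let M and N be Frobenius algebra objects in C. Then every morphism of Frobenius algebra objects φ : M → N is an isomorphism in C. -/
open CategoryTheory MonoidalCategory

/-- A Frobenius algebra object in a monoidal category `C`: an object equipped with a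
monoid structure and a comonoid structure satisfying the Frobenius condition. -/
structure FrobeniusAlgebraObject (C : Type*) [Category C] [MonoidalCategory C] where
  /-- The underlying object. -/
  X : C
  /-- The multiplication. -/
  mul : X ⊗ X ⟶ X
  /-- The unit. -/
  one : 𝟙_ C ⟶ X
  /-- The comultiplication. -/
  comul : X ⟶ X ⊗ X
  /-- The counit. -/
  counit : X ⟶ 𝟙_ C
  one_mul : (one ▷ X) ≫ mul = (λ_ X).hom
  mul_one : (X ◁ one) ≫ mul = (ρ_ X).hom
  mul_assoc : (mul ▷ X) ≫ mul = (α_ X X X).hom ≫ (X ◁ mul) ≫ mul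
  comul_counit : comul ≫ (X ◁ counit) = (ρ_ X).inv
  counit_comul : comul ≫ (counit ▷ X) = (λ_ X).inv
  comul_assoc : comul ≫ (comul ▷ X) ≫ (α_ X X X).hom = comul ≫ (X ◁ comul)
  /-- The Frobenius condition, first half: `(id ⊗ μ) ∘ (δ ⊗ id) = δ ∘ μ`. -/
  frobenius₁ : (comul ▷ X) ≫ (α_ X X X).hom ≫ (X ◁ mul) = mul ≫ comul
  /-- The Frobenius condition, second half: `(μ ⊗ id) ∘ (id ⊗ δ) = δ ∘ μ`. -/
  frobenius₂ : (X ◁ comul) ≫ (α_ X X X).inv ≫ (mul ▷ X) = mul ≫ comul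

/-- A morphism of Frobenius algebra objects: a morphism in `C` commuting with the
multiplications, units, comultiplications and counits. -/
structure FrobeniusAlgebraObject.Hom {C : Type*} [Category C] [MonoidalCategory C]
    (M N : FrobeniusAlgebraObject C) where
  /-- The underlying morphism in `C`. -/
  hom : M.X ⟶ N.X
  mul_hom : M.mul ≫ hom = (hom ⊗ₘ hom) ≫ N.mul
  one_hom : M.one ≫ hom = N.one
  comul_hom : M.comul ≫ (hom ⊗ₘ hom) = hom ≫ N.comul
  counit_hom : hom ≫ N.counit = M.counit

/-- The snake identity for a Frobenius algebra object, in atomic form. -/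
lemma FrobeniusAlgebraObject.snake {C : Type*} [Category C] [MonoidalCategory C]
    (F : FrobeniusAlgebraObject C) :
    (λ_ F.X).inv ≫ F.one ▷ F.X ≫ F.comul ▷ F.X ≫ (α_ F.X F.X F.X).hom ≫
      F.X ◁ F.mul ≫ F.X ◁ F.counit ≫ (ρ_ F.X).hom = 𝟙 F.X := by
  have h := F.frobenius₁
  calc (λ_ F.X).inv ≫ F.one ▷ F.X ≫ F.comul ▷ F.X ≫ (α_ F.X F.X F.X).hom ≫
      F.X ◁ F.mul ≫ F.X ◁ F.counit ≫ (ρ_ F.X).hom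
      = (λ_ F.X).inv ≫ F.one ▷ F.X ≫ ((F.comul ▷ F.X ≫ (α_ F.X F.X F.X).hom ≫
        F.X ◁ F.mul) ≫ F.X ◁ F.counit ≫ (ρ_ F.X).hom) := by simp only [Category.assoc]
    _ = (λ_ F.X).inv ≫ (F.one ▷ F.X ≫ F.mul) ≫ (F.comul ≫ F.X ◁ F.counit) ≫ (ρ_ F.X).hom := by
        rw [h]; simp only [Category.assoc]
    _ = 𝟙 F.X := by rw [F.one_mul, F.comul_counit]; simp

/-- In a monoidal category, every morphism of Frobenius algebra objects
is an isomorphism (on underlying objects). -/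
theorem FrobeniusAlgebraObject.Hom.isIso {C : Type*} [Category C] [MonoidalCategory C]
    (M N : FrobeniusAlgebraObject C) (φ : FrobeniusAlgebraObject.Hom M N) :
    IsIso φ.hom := by
  have hpair : (φ.hom ⊗ₘ φ.hom) ≫ N.mul ≫ N.counit = M.mul ≫ M.counit := by
    rw [← Category.assoc, ← φ.mul_hom, Category.assoc, φ.counit_hom]
  have hcopair : M.one ≫ M.comul ≫ (φ.hom ⊗ₘ φ.hom) = N.one ≫ N.comul := by
    rw [φ.comul_hom, ← Category.assoc, φ.one_hom]
  refine ⟨(λ_ N.X).inv ≫ (M.one ≫ M.comul) ▷ N.X ≫ (α_ M.X M.X N.X).hom ≫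
      M.X ◁ (φ.hom ▷ N.X ≫ N.mul ≫ N.counit) ≫ (ρ_ M.X).hom, ?_, ?_⟩
  · -- φ.hom ≫ ψ = 𝟙
    simp only [comp_whiskerRight, MonoidalCategory.whiskerLeft_comp, Category.assoc]
    rw [leftUnitor_inv_naturality_assoc, whisker_exchange_assoc, whisker_exchange_assoc,
      associator_naturality_right_assoc, ← MonoidalCategory.whiskerLeft_comp_assoc,
      ← tensorHom_def']
    rw [← MonoidalCategory.whiskerLeft_comp_assoc, ← MonoidalCategory.whiskerLeft_comp_assoc,
      Category.assoc, hpair, MonoidalCategory.whiskerLeft_comp_assoc]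
    exact M.snake
  · -- ψ ≫ φ.hom = 𝟙
    simp only [comp_whiskerRight, MonoidalCategory.whiskerLeft_comp, Category.assoc]
    rw [← rightUnitor_naturality, whisker_exchange_assoc, whisker_exchange_assoc,
      whisker_exchange_assoc, ← associator_naturality_left_assoc,
      ← associator_naturality_middle_assoc,
      ← comp_whiskerRight_assoc (φ.hom ▷ M.X) (N.X ◁ φ.hom),
      ← MonoidalCategory.tensorHom_def]
    have key : M.one ▷ N.X ≫ M.comul ▷ N.X ≫ (φ.hom ⊗ₘ φ.hom) ▷ N.X =
        N.one ▷ N.X ≫ N.comul ▷ N.X := by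
      rw [← comp_whiskerRight, ← comp_whiskerRight, hcopair, comp_whiskerRight]
    rw [reassoc_of% key]
    exact N.snake
end
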